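/- arXiv:1003.5347 — 2 statements merged into one kernel-verified Lean document; each statement's English description precedes it below -/
import Mathlib

section
/- Let s be a prime and let X, Y, Z be positive integers with X, Y, Z < s. Then Σ_{a=1}^{s−1} | R_s(X, Y, Z; a) − X·Y·Z/(s−1) |² = (1/(s−1)) · Σ_{χ ≠ χ₀} |S_s(X; χ)|² · |S_s(Y; χ)|² · |S_s(Z; χ)|², where the sum on the right runs over all nonprincipal multiplicative characters χ modulo s. -/
open scoped Classical

/-- `R_s(X, Y, Z; a)`: the number of triples `(x, y, z)` with `1 ≤ x ≤ X`, `1 ≤ y ≤ Y`,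
`1 ≤ z ≤ Z` and `x y ≡ a z (mod s)`. -/
def Rcount (s X Y Z a : ℕ) : ℕ :=
  ((Finset.Icc 1 X ×ˢ Finset.Icc 1 Y ×ˢ Finset.Icc 1 Z).filter
    fun t => (t.1 * t.2.1) % s = (a * t.2.2) % s).card

section Aux

variable {s : ℕ} [Fact (s.Prime)]

private lemma conj_char (χ : DirichletCharacter ℂ s) (x : ZMod s) :
    (starRingEnd ℂ) (χ x) = χ x⁻¹ := by
  rw [← MulChar.inv_apply' χ x]
  exact MulChar.star_apply' χ x

private lemma sum_Icc_zmod (g : ZMod s → ℂ) (hg : g 0 = 0) :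
    ∑ a ∈ Finset.Icc 1 (s - 1), g ((a : ℕ) : ZMod s) = ∑ x : ZMod s, g x := by
  have h0 : 0 < s := (Fact.out : s.Prime).pos
  haveI : NeZero s := ⟨h0.ne'⟩
  have h1 : ∑ x : ZMod s, g x = ∑ a ∈ Finset.range s, g ((a : ℕ) : ZMod s) := by
    refine Finset.sum_nbij' (fun x => ZMod.val x) (fun a => ((a : ℕ) : ZMod s))
      (fun x _ => Finset.mem_range.mpr (ZMod.val_lt x)) (fun a _ => Finset.mem_univ _)
      (fun x _ => by simp) (fun a ha => ?_) (fun x _ => by rw [ZMod.natCast_val, ZMod.cast_id])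
    · exact ZMod.val_cast_of_lt (Finset.mem_range.mp ha)
  rw [h1, Finset.range_eq_Ico, Finset.sum_eq_sum_Ico_succ_bot h0]
  rw [Nat.cast_zero, hg, zero_add]
  have h2 : Finset.Ico 1 s = Finset.Icc 1 (s - 1) := by
    rw [← Finset.Ico_add_one_right_eq_Icc]; congr 1; omega
  rw [h2]

end Aux

section Aux2

variable {s : ℕ} [Fact (s.Prime)]

private lemma orth_a (χ ψ : DirichletCharacter ℂ s) :
    ∑ a ∈ Finset.Icc 1 (s - 1),
        χ (((a : ℕ) : ZMod s))⁻¹ * (starRingEnd ℂ) (ψ (((a : ℕ) : ZMod s))⁻¹) =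
      if χ = ψ then (((s - 1 : ℕ) : ℂ)) else 0 := by
  have hcard : Fintype.card (ZMod s)ˣ = s - 1 := by
    rw [ZMod.card_units_eq_totient, Nat.totient_prime (Fact.out : s.Prime)]
  have key : ∀ x : ZMod s, χ x⁻¹ * (starRingEnd ℂ) (ψ x⁻¹) = (χ⁻¹ * ψ) x := by
    intro x
    rw [conj_char, inv_inv, ← MulChar.inv_apply' χ x, MulChar.coeToFun_mul, Pi.mul_apply]
  rw [sum_Icc_zmod (fun x => χ x⁻¹ * (starRingEnd ℂ) (ψ x⁻¹)) ?_]
  · simp_rw [key]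
    by_cases h : χ = ψ
    · subst h
      rw [if_pos rfl, inv_mul_cancel, MulChar.sum_one_eq_card_units, hcard]
    · rw [if_neg h]
      exact MulChar.sum_eq_zero_of_ne_one (by rwa [ne_eq, inv_mul_eq_one])
  · simp [MulChar.map_nonunit χ (not_isUnit_zero (M₀ := ZMod s))]

end Aux2

section Aux3

variable {s : ℕ} [Fact (s.Prime)]

private lemma sum_prod3 (A B C : Finset ℕ) (g1 g2 g3 : ℕ → ℂ) :
    ∑ t ∈ A ×ˢ B ×ˢ C, g1 t.1 * g2 t.2.1 * g3 t.2.2 =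
      (∑ x ∈ A, g1 x) * (∑ y ∈ B, g2 y) * (∑ z ∈ C, g3 z) := by
  rw [Finset.sum_product]
  simp_rw [Finset.sum_product]
  conv_rhs => rw [Finset.sum_mul_sum, Finset.sum_mul_sum]
  refine Finset.sum_congr rfl fun x _ => ?_
  rw [Finset.sum_comm]
  refine Finset.sum_congr rfl fun z _ => ?_
  rw [Finset.sum_mul]

set_option maxHeartbeats 1000000 in
private lemma count_expand (X Y Z a : ℕ) (hXs : X < s) (hYs : Y < s) (hZs : Z < s)
    (ha : IsUnit ((a : ℕ) : ZMod s)) :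
    ((s - 1 : ℕ) : ℂ) * (Rcount s X Y Z a : ℂ) =
      ∑ χ : DirichletCharacter ℂ s,
        χ (((a : ℕ) : ZMod s))⁻¹ *
          ((∑ x ∈ Finset.Icc 1 X, χ ((x : ℕ) : ZMod s)) *
            (∑ y ∈ Finset.Icc 1 Y, χ ((y : ℕ) : ZMod s)) *
            (starRingEnd ℂ) (∑ z ∈ Finset.Icc 1 Z, χ ((z : ℕ) : ZMod s))) := by
  classical
  have hsp : s.Prime := Fact.out
  -- units of casts
  have hunit : ∀ {W w : ℕ}, W < s → w ∈ Finset.Icc 1 W → IsUnit ((w : ℕ) : ZMod s) := by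
    intro W w hW hw
    rw [Finset.mem_Icc] at hw
    have hne : ((w : ℕ) : ZMod s) ≠ 0 := by
      rw [Ne, ZMod.natCast_eq_zero_iff]
      intro hdvd
      have := Nat.le_of_dvd hw.1 hdvd
      omega
    exact isUnit_iff_ne_zero.mpr hne
  -- step 1 : Rcount as a sum of indicators in ZMod s
  have h1 : (Rcount s X Y Z a : ℂ) =
      ∑ t ∈ Finset.Icc 1 X ×ˢ Finset.Icc 1 Y ×ˢ Finset.Icc 1 Z,
        if ((t.1 : ℕ) : ZMod s) * ((t.2.1 : ℕ) : ZMod s) =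
            ((a : ℕ) : ZMod s) * ((t.2.2 : ℕ) : ZMod s) then (1 : ℂ) else 0 := by
    rw [Rcount, Finset.card_filter]
    push_cast
    refine Finset.sum_congr rfl fun t _ => ?_
    congr 1
    · rw [eq_iff_iff, ← ZMod.natCast_eq_natCast_iff']
      push_cast
      rfl
  haveI : NeZero s := ⟨hsp.pos.ne'⟩
  have h2 : ∀ t : ℕ × ℕ × ℕ, t ∈ Finset.Icc 1 X ×ˢ Finset.Icc 1 Y ×ˢ Finset.Icc 1 Z →
      ((s - 1 : ℕ) : ℂ) * (if ((t.1 : ℕ) : ZMod s) * ((t.2.1 : ℕ) : ZMod s) =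
            ((a : ℕ) : ZMod s) * ((t.2.2 : ℕ) : ZMod s) then (1 : ℂ) else 0) =
        ∑ χ : DirichletCharacter ℂ s,
          χ ((((a : ℕ) : ZMod s)) * ((t.2.2 : ℕ) : ZMod s))⁻¹ *
            χ (((t.1 : ℕ) : ZMod s) * ((t.2.1 : ℕ) : ZMod s)) := by
    intro t ht
    rw [Finset.mem_product, Finset.mem_product] at ht
    rw [DirichletCharacter.sum_char_inv_mul_char_eq ℂ (ha.mul (hunit hZs ht.2.2)), Nat.totient_prime hsp]
    by_cases h : ((t.1 : ℕ) : ZMod s) * ((t.2.1 : ℕ) : ZMod s) =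
        ((a : ℕ) : ZMod s) * ((t.2.2 : ℕ) : ZMod s)
    · rw [if_pos h, if_pos h.symm, mul_one]
    · rw [if_neg h, if_neg (fun hh => h hh.symm), mul_zero]
  rw [h1, Finset.mul_sum]
  rw [Finset.sum_congr rfl h2, Finset.sum_comm]
  refine Finset.sum_congr rfl fun χ _ => ?_
  have h3 : ∀ t : ℕ × ℕ × ℕ,
      χ ((((a : ℕ) : ZMod s)) * ((t.2.2 : ℕ) : ZMod s))⁻¹ *
          χ (((t.1 : ℕ) : ZMod s) * ((t.2.1 : ℕ) : ZMod s)) =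
        χ (((a : ℕ) : ZMod s))⁻¹ *
          (χ ((t.1 : ℕ) : ZMod s) * χ ((t.2.1 : ℕ) : ZMod s) *
            (starRingEnd ℂ) (χ ((t.2.2 : ℕ) : ZMod s))) := by
    intro t
    rw [mul_inv, map_mul, map_mul, conj_char]
    ring
  rw [Finset.sum_congr rfl fun t _ => h3 t, ← Finset.mul_sum]
  congr 1
  rw [map_sum]
  exact sum_prod3 _ _ _ (fun x => χ ((x : ℕ) : ZMod s)) (fun y => χ ((y : ℕ) : ZMod s)) (fun z => (starRingEnd ℂ) (χ ((z : ℕ) : ZMod s)))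

end Aux3

section Aux4

variable {s : ℕ} [Fact (s.Prime)]

private lemma hunit' {W w : ℕ} (hW : W < s) (hw : w ∈ Finset.Icc 1 W) :
    IsUnit ((w : ℕ) : ZMod s) := by
  rw [Finset.mem_Icc] at hw
  have hne : ((w : ℕ) : ZMod s) ≠ 0 := by
    rw [Ne, ZMod.natCast_eq_zero_iff]
    intro hdvd
    have := Nat.le_of_dvd hw.1 hdvd
    omega
  exact isUnit_iff_ne_zero.mpr hne

private lemma c_ne_zero : ((s - 1 : ℕ) : ℂ) ≠ 0 := by
  have := (Fact.out : s.Prime).two_le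
  rw [Ne, Nat.cast_eq_zero]
  omega

set_option maxHeartbeats 1000000 in
private lemma count_sub (X Y Z a : ℕ) (hXs : X < s) (hYs : Y < s) (hZs : Z < s)
    (ha : IsUnit ((a : ℕ) : ZMod s)) :
    (Rcount s X Y Z a : ℂ) - (X : ℂ) * Y * Z / ((s - 1 : ℕ) : ℂ) =
      (1 / ((s - 1 : ℕ) : ℂ)) *
        ∑ χ ∈ Finset.univ.filter fun χ : DirichletCharacter ℂ s => χ ≠ 1,
          χ (((a : ℕ) : ZMod s))⁻¹ *
            ((∑ x ∈ Finset.Icc 1 X, χ ((x : ℕ) : ZMod s)) *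
              (∑ y ∈ Finset.Icc 1 Y, χ ((y : ℕ) : ZMod s)) *
              (starRingEnd ℂ) (∑ z ∈ Finset.Icc 1 Z, χ ((z : ℕ) : ZMod s))) := by
  classical
  have hsp : s.Prime := Fact.out
  have hc := c_ne_zero (s := s)
  have hce := count_expand X Y Z a hXs hYs hZs ha
  -- split off the principal character
  have hsplit : ∑ χ : DirichletCharacter ℂ s,
      χ (((a : ℕ) : ZMod s))⁻¹ *
        ((∑ x ∈ Finset.Icc 1 X, χ ((x : ℕ) : ZMod s)) *
          (∑ y ∈ Finset.Icc 1 Y, χ ((y : ℕ) : ZMod s)) *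
          (starRingEnd ℂ) (∑ z ∈ Finset.Icc 1 Z, χ ((z : ℕ) : ZMod s))) =
      (X : ℂ) * Y * Z +
        ∑ χ ∈ Finset.univ.filter fun χ : DirichletCharacter ℂ s => χ ≠ 1,
          χ (((a : ℕ) : ZMod s))⁻¹ *
            ((∑ x ∈ Finset.Icc 1 X, χ ((x : ℕ) : ZMod s)) *
              (∑ y ∈ Finset.Icc 1 Y, χ ((y : ℕ) : ZMod s)) *
              (starRingEnd ℂ) (∑ z ∈ Finset.Icc 1 Z, χ ((z : ℕ) : ZMod s))) := by
    rw [← Finset.sum_filter_add_sum_filter_not Finset.univ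
      (fun χ : DirichletCharacter ℂ s => χ = 1)]
    congr 1
    · rw [Finset.filter_eq', if_pos (Finset.mem_univ _), Finset.sum_singleton]
      have hone : ∀ {W : ℕ}, W < s →
          ∑ w ∈ Finset.Icc 1 W, (1 : DirichletCharacter ℂ s) ((w : ℕ) : ZMod s) = (W : ℂ) := by
        intro W hW
        rw [Finset.sum_congr rfl fun w hw => MulChar.one_apply (hunit' hW hw)]
        simp [Nat.card_Icc]
      have ha' : IsUnit (((a : ℕ) : ZMod s))⁻¹ :=
        isUnit_iff_ne_zero.mpr (inv_ne_zero (isUnit_iff_ne_zero.mp ha))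
      rw [hone hXs, hone hYs, hone hZs, MulChar.one_apply ha', one_mul, map_natCast]
  rw [hsplit] at hce
  have hR : (Rcount s X Y Z a : ℂ) =
      ((X : ℂ) * Y * Z +
        ∑ χ ∈ Finset.univ.filter fun χ : DirichletCharacter ℂ s => χ ≠ 1,
          χ (((a : ℕ) : ZMod s))⁻¹ *
            ((∑ x ∈ Finset.Icc 1 X, χ ((x : ℕ) : ZMod s)) *
              (∑ y ∈ Finset.Icc 1 Y, χ ((y : ℕ) : ZMod s)) *
              (starRingEnd ℂ) (∑ z ∈ Finset.Icc 1 Z, χ ((z : ℕ) : ZMod s)))) /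
        ((s - 1 : ℕ) : ℂ) := by
    rw [eq_div_iff hc]
    linear_combination hce
  rw [hR]
  ring

end Aux4

section Aux5

variable {s : ℕ} [Fact (s.Prime)]

set_option maxHeartbeats 1600000 in
private lemma sum_fa (X Y Z : ℕ) (hXs : X < s) (hYs : Y < s) (hZs : Z < s) :
    ∑ a ∈ Finset.Icc 1 (s - 1),
        ((Rcount s X Y Z a : ℂ) - (X : ℂ) * Y * Z / ((s - 1 : ℕ) : ℂ)) *
          (starRingEnd ℂ) ((Rcount s X Y Z a : ℂ) - (X : ℂ) * Y * Z / ((s - 1 : ℕ) : ℂ)) =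
      (1 / ((s - 1 : ℕ) : ℂ)) *
        ∑ χ ∈ Finset.univ.filter fun χ : DirichletCharacter ℂ s => χ ≠ 1,
          ((∑ x ∈ Finset.Icc 1 X, χ ((x : ℕ) : ZMod s)) *
              (starRingEnd ℂ) (∑ x ∈ Finset.Icc 1 X, χ ((x : ℕ) : ZMod s))) *
            ((∑ y ∈ Finset.Icc 1 Y, χ ((y : ℕ) : ZMod s)) *
              (starRingEnd ℂ) (∑ y ∈ Finset.Icc 1 Y, χ ((y : ℕ) : ZMod s))) *
            ((∑ z ∈ Finset.Icc 1 Z, χ ((z : ℕ) : ZMod s)) *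
              (starRingEnd ℂ) (∑ z ∈ Finset.Icc 1 Z, χ ((z : ℕ) : ZMod s))) := by
  classical
  have hsp : s.Prime := Fact.out
  have hc := c_ne_zero (s := s)
  set c : ℂ := ((s - 1 : ℕ) : ℂ) with hcdef
  set G := Finset.univ.filter fun χ : DirichletCharacter ℂ s => χ ≠ 1 with hG
  set T : DirichletCharacter ℂ s → ℂ := fun χ =>
    (∑ x ∈ Finset.Icc 1 X, χ ((x : ℕ) : ZMod s)) *
      (∑ y ∈ Finset.Icc 1 Y, χ ((y : ℕ) : ZMod s)) *
      (starRingEnd ℂ) (∑ z ∈ Finset.Icc 1 Z, χ ((z : ℕ) : ZMod s)) with hT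
  set E : ℕ → DirichletCharacter ℂ s → ℂ := fun a χ => χ (((a : ℕ) : ZMod s))⁻¹ with hE
  have hconjc : (starRingEnd ℂ) c = c := by
    rw [hcdef]; exact Complex.conj_natCast _
  -- step 1 : rewrite each term with count_sub
  have h1 : ∀ a ∈ Finset.Icc 1 (s - 1),
      ((Rcount s X Y Z a : ℂ) - (X : ℂ) * Y * Z / c) *
          (starRingEnd ℂ) ((Rcount s X Y Z a : ℂ) - (X : ℂ) * Y * Z / c) =
        ∑ χ ∈ G, ∑ ψ ∈ G,
          ((1 / c) * (1 / c) * (T χ * (starRingEnd ℂ) (T ψ))) *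
            (E a χ * (starRingEnd ℂ) (E a ψ)) := by
    intro a ha
    have hu : IsUnit ((a : ℕ) : ZMod s) :=
      hunit' (Nat.sub_lt hsp.pos one_pos) ha
    rw [count_sub X Y Z a hXs hYs hZs hu]
    rw [map_mul, map_sum, map_div₀, map_one, hconjc, mul_mul_mul_comm,
      Finset.sum_mul_sum, Finset.mul_sum]
    refine Finset.sum_congr rfl fun χ _ => ?_
    rw [Finset.mul_sum]
    refine Finset.sum_congr rfl fun ψ _ => ?_
    rw [map_mul]
    ring
  rw [Finset.sum_congr rfl h1]
  -- step 2 : swap sums and apply orthogonality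
  rw [Finset.sum_comm]
  have h2 : ∀ χ ∈ G,
      (∑ a ∈ Finset.Icc 1 (s - 1), ∑ ψ ∈ G,
        ((1 / c) * (1 / c) * (T χ * (starRingEnd ℂ) (T ψ))) *
          (E a χ * (starRingEnd ℂ) (E a ψ))) =
      (1 / c) * (T χ * (starRingEnd ℂ) (T χ)) := by
    intro χ hχ
    rw [Finset.sum_comm]
    have h3 : ∀ ψ ∈ G,
        (∑ a ∈ Finset.Icc 1 (s - 1),
          ((1 / c) * (1 / c) * (T χ * (starRingEnd ℂ) (T ψ))) *
            (E a χ * (starRingEnd ℂ) (E a ψ))) =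
        ((1 / c) * (1 / c) * (T χ * (starRingEnd ℂ) (T ψ))) *
          (if χ = ψ then c else 0) := by
      intro ψ _
      rw [← Finset.mul_sum]
      congr 1
      exact orth_a χ ψ
    rw [Finset.sum_congr rfl h3]
    have h4 : ∀ ψ ∈ G,
        ((1 / c) * (1 / c) * (T χ * (starRingEnd ℂ) (T ψ)) * if χ = ψ then c else 0) =
        if χ = ψ then (1 / c) * (1 / c) * (T χ * (starRingEnd ℂ) (T ψ)) * c else 0 := by
      intro ψ _
      split_ifs <;> simp
    rw [Finset.sum_congr rfl h4, Finset.sum_ite_eq G χ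
      (fun ψ => (1 / c) * (1 / c) * (T χ * (starRingEnd ℂ) (T ψ)) * c), if_pos hχ]
    field_simp
  rw [Finset.sum_congr rfl h2, ← Finset.mul_sum]
  congr 1
  refine Finset.sum_congr rfl fun χ _ => ?_
  rw [hT]
  simp only [map_mul, Complex.conj_conj]
  ring

end Aux5


set_option maxHeartbeats 1600000 in
theorem rcount_second_moment_char (s : ℕ) (hs : s.Prime) (X Y Z : ℕ)
    (hX : 0 < X) (hY : 0 < Y) (hZ : 0 < Z)
    (hXs : X < s) (hYs : Y < s) (hZs : Z < s) :
    ∑ a ∈ Finset.Icc 1 (s - 1),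
        ((Rcount s X Y Z a : ℝ) - (X : ℝ) * Y * Z / ((s : ℝ) - 1)) ^ 2 =
      (1 / ((s : ℝ) - 1)) *
        ∑ χ ∈ Finset.univ.filter fun χ : DirichletCharacter ℂ s => χ ≠ 1,
          ‖∑ x ∈ Finset.Icc 1 X, χ (x : ZMod s)‖ ^ 2 *
            ‖∑ y ∈ Finset.Icc 1 Y, χ (y : ZMod s)‖ ^ 2 *
            ‖∑ z ∈ Finset.Icc 1 Z, χ (z : ZMod s)‖ ^ 2 := by
  haveI : Fact s.Prime := ⟨hs⟩
  have hkey := sum_fa (s := s) X Y Z hXs hYs hZs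
  have hc1 : ((s - 1 : ℕ) : ℂ) = (s : ℂ) - 1 := by
    have h := hs.one_le
    push_cast [h]
    ring
  apply Complex.ofReal_injective
  push_cast
  rw [← hc1]
  refine Eq.trans (Finset.sum_congr rfl fun a _ => ?_) (hkey.trans ?_)
  · rw [sq]
    congr 1
    simp [map_sub, map_div₀, map_mul, Complex.conj_natCast]
  · congr 1
    refine Finset.sum_congr (by congr) fun χ _ => ?_
    simp only [← Complex.ofReal_pow, Complex.sq_norm, ← Complex.mul_conj]
end

section
/- Let q, M, N be positive integers, let a be an integer with 1 ≤ a ≤ q, and let d = gcd(a, q). Then T_q(M, N; a) = Σ_{e | d} T*_{q/e}(⌊M/e⌋, N; a/e), i.e., the number of pairs (m, n) with 1 ≤ m ≤ M, 1 ≤ n ≤ N and m·n ≡ a (mod q) equals the sum over divisors e of d of the number of pairs (x, y) with 1 ≤ x ≤ ⌊M/e⌋, gcd(x, q/e) = 1, 1 ≤ y ≤ N and x·y ≡ (a/e) (mod q/e). -/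
/-- `T_q(M, N; a)`: the number of pairs `(m, n)` with `1 ≤ m ≤ M`, `1 ≤ n ≤ N`
and `m n ≡ a (mod q)`. -/
def Tcount (q M N a : ℕ) : ℕ :=
  ((Finset.Icc 1 M ×ˢ Finset.Icc 1 N).filter fun p => (p.1 * p.2) % q = a % q).card

/-- `T*_s(X, Y; b)`: the number of pairs `(x, y)` with `1 ≤ x ≤ X`, `gcd(x, s) = 1`,
`1 ≤ y ≤ Y` and `x y ≡ b (mod s)`. -/
def TstarCount (s X Y b : ℕ) : ℕ :=
  ((Finset.Icc 1 X ×ˢ Finset.Icc 1 Y).filter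
    fun p => Nat.gcd p.1 s = 1 ∧ (p.1 * p.2) % s = b % s).card

theorem tcount_eq_sum_tstar (q M N a : ℕ) (hq : 0 < q) (hM : 0 < M) (hN : 0 < N)
    (ha1 : 1 ≤ a) (haq : a ≤ q) :
    Tcount q M N a =
      ∑ e ∈ (Nat.gcd a q).divisors, TstarCount (q / e) (M / e) N (a / e) := by
  classical
  have hd0 : Nat.gcd a q ≠ 0 := Nat.gcd_ne_zero_left (by omega)
  rw [Tcount,
    Finset.card_eq_sum_card_fiberwise (f := fun p : ℕ × ℕ => Nat.gcd p.1 q)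
      (t := (Nat.gcd a q).divisors) ?_]
  · apply Finset.sum_congr rfl
    intro e he
    rw [Nat.mem_divisors] at he
    have hea : e ∣ a := he.1.trans (Nat.gcd_dvd_left a q)
    have heq : e ∣ q := he.1.trans (Nat.gcd_dvd_right a q)
    have he0 : 0 < e := Nat.pos_of_dvd_of_pos heq hq
    rw [TstarCount]
    refine Finset.card_bij' (fun p _ => (p.1 / e, p.2)) (fun p _ => (e * p.1, p.2))
      ?_ ?_ ?_ ?_
    · -- hi : image in target
      rintro ⟨m, n⟩ hp
      simp only [Finset.mem_filter, Finset.mem_product, Finset.mem_Icc] at hp ⊢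
      obtain ⟨⟨⟨⟨hm1, hmM⟩, hn1, hnN⟩, hmod⟩, hgcd⟩ := hp
      have hem : e ∣ m := hgcd ▸ Nat.gcd_dvd_left m q
      have hcop : Nat.gcd (m / e) (q / e) = 1 := by
        rw [← hgcd]
        exact Nat.coprime_div_gcd_div_gcd (hgcd ▸ he0)
      obtain ⟨x, rfl⟩ := hem
      have hx : (e * x) / e = x := Nat.mul_div_cancel_left x he0
      have hx1 : 1 ≤ x := Nat.pos_of_ne_zero fun h => by simp [h] at hm1
      refine ⟨⟨⟨by rw [hx]; exact hx1, Nat.div_le_div_right hmM⟩,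
        hn1, hnN⟩, hcop, ?_⟩
      have h2 : e * (x * n) ≡ e * (a / e) [MOD q] := by
        rw [Nat.mul_div_cancel' hea, ← mul_assoc]; exact hmod
      have h3 := h2.cancel_left_div_gcd hq
      rw [Nat.gcd_comm q e, Nat.gcd_eq_left heq] at h3
      rw [hx]
      exact h3
    · -- hj : preimage in source
      rintro ⟨x, y⟩ hp
      simp only [Finset.mem_filter, Finset.mem_product, Finset.mem_Icc] at hp ⊢
      obtain ⟨⟨⟨hx1, hxM⟩, hy1, hyN⟩, hcop, hmod⟩ := hp
      refine ⟨⟨⟨⟨Nat.one_le_iff_ne_zero.2 (by positivity), ?_⟩, hy1, hyN⟩, ?_⟩, ?_⟩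
      · calc e * x ≤ e * (M / e) := Nat.mul_le_mul_left e hxM
          _ ≤ M := Nat.mul_div_le M e
      · have h2 : e * (x * y) ≡ e * (a / e) [MOD e * (q / e)] :=
          Nat.ModEq.mul_left' e hmod
        rw [Nat.mul_div_cancel' hea, Nat.mul_div_cancel' heq, ← mul_assoc] at h2
        exact h2
      · conv_lhs => rw [(Nat.mul_div_cancel' heq).symm]
        rw [Nat.gcd_mul_left, hcop, mul_one]
    · -- left_inv
      rintro ⟨m, n⟩ hp
      simp only [Finset.mem_filter, Finset.mem_product, Finset.mem_Icc] at hp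
      have hem : e ∣ m := hp.2 ▸ Nat.gcd_dvd_left m q
      simp [Nat.mul_div_cancel' hem]
    · -- right_inv
      rintro ⟨x, y⟩ hp
      simp [Nat.mul_div_cancel_left _ he0]
  · rintro ⟨m, n⟩ hp
    simp only [Finset.mem_coe, Finset.mem_filter, Finset.mem_product, Finset.mem_Icc] at hp
    obtain ⟨⟨⟨hm1, hmM⟩, hn1, hnN⟩, hmod⟩ := hp
    rw [Finset.mem_coe, Nat.mem_divisors]
    refine ⟨Nat.dvd_gcd ?_ (Nat.gcd_dvd_right m q), hd0⟩
    have hg0 : 0 < Nat.gcd m q := Nat.gcd_pos_of_pos_right m hq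
    have h1 : Nat.ModEq (Nat.gcd m q) (m * n) a :=
      Nat.ModEq.of_dvd (Nat.gcd_dvd_right m q) hmod
    have h2 : (m * n) % Nat.gcd m q = 0 :=
      Nat.mod_eq_zero_of_dvd ((Nat.gcd_dvd_left m q).mul_right n)
    exact Nat.dvd_of_mod_eq_zero (by rw [← h1]; exact h2)
end
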